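/- Let 𝔤 be a simple (nonabelian) finite-dimensional Lie algebra of dimension d over a field K, let A be a generating set of 𝔤 (as a Lie algebra), and let b ∈ 𝔤 be a nonzero element. Then for every k ≤ d, the union T_{≤k}(A,b) = T_0(A,b) ∪ ⋯ ∪ T_k(A,b) spans a vector subspace of 𝔤 of dimension at least k. In particular, T_{≤d}(A,b) spans 𝔤. -/
import Mathlib


variable {K : Type*} [Field K] {L : Type*} [LieRing L] [LieAlgebra K L]

/-- The absolute tower `T_k(A)`. -/
def tower (A : Set L) : ℕ → Set L
  | 0 => {0}
  | 1 => A
  | (k + 2) =>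
      Set.image2 (fun a t => ⁅a, t⁆) A (tower A (k + 1)) ∪
        Set.image2 (fun t a => ⁅t, a⁆) (tower A (k + 1)) A

/-- The relative tower `T_k(A, b)`. -/
def towerRel (A : Set L) (b : L) : ℕ → Set L
  | 0 => {0}
  | 1 => {b}
  | (k + 2) =>
      Set.image2 (fun x t => ⁅x, t⁆) {b} (tower A (k + 1)) ∪
        Set.image2 (fun t x => ⁅t, x⁆) (tower A (k + 1)) {b} ∪
        Set.image2 (fun a t => ⁅a, t⁆) A (towerRel A b (k + 1)) ∪
        Set.image2 (fun t a => ⁅t, a⁆) (towerRel A b (k + 1)) A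

namespace StmtAux

variable (K) (A : Set L) (b : L)

def S (k : ℕ) : Set L := ⋃ j ∈ Finset.range (k + 1), towerRel A b j

def W (k : ℕ) : Submodule K L := Submodule.span K (S A b k)

variable {A b}

lemma S_mono {k : ℕ} : S A b k ⊆ S A b (k + 1) := by
  intro x hx
  simp only [S, Set.mem_iUnion, Finset.mem_range] at hx ⊢
  obtain ⟨j, hj, h⟩ := hx
  exact ⟨j, by omega, h⟩

lemma W_mono {k : ℕ} : W K A b k ≤ W K A b (k + 1) :=
  Submodule.span_mono S_mono

lemma b_mem_W {k : ℕ} (hk : 1 ≤ k) : b ∈ W K A b k := by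
  apply Submodule.subset_span
  simp only [S, Set.mem_iUnion, Finset.mem_range]
  exact ⟨1, by omega, by simp [towerRel]⟩

lemma lie_mem_towerRel {a : L} (ha : a ∈ A) {j : ℕ} {x : L} (hx : x ∈ towerRel A b (j + 1)) :
    ⁅a, x⁆ ∈ towerRel A b (j + 2) := by
    have : ⁅a, x⁆ ∈ Set.image2 (fun a t => ⁅a, t⁆) A (towerRel A b (j + 1)) :=
      Set.mem_image2_of_mem ha hx
    simp only [towerRel]
    exact Or.inl (Or.inr this)

lemma lie_mem_W {a : L} (ha : a ∈ A) {k : ℕ} {x : L} (hx : x ∈ W K A b k) :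
    ⁅a, x⁆ ∈ W K A b (k + 1) := by
  induction hx using Submodule.span_induction with
  | mem y hy =>
      simp only [S, Set.mem_iUnion, Finset.mem_range] at hy
      obtain ⟨j, hj, h⟩ := hy
      match j with
      | 0 =>
        simp only [towerRel, Set.mem_singleton_iff] at h
        subst h
        simp
      | j + 1 =>
        apply Submodule.subset_span
        simp only [S, Set.mem_iUnion, Finset.mem_range]
        exact ⟨j + 2, by omega, lie_mem_towerRel ha h⟩
  | zero => simp
  | add y z _ _ hy hz => rw [lie_add]; exact add_mem hy hz
  | smul c y _ hy => rw [lie_smul]; exact Submodule.smul_mem _ _ hy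

lemma lie_mem_of_forall (hA : LieSubalgebra.lieSpan K L A = ⊤) (Wm : Submodule K L)
    (h : ∀ a ∈ A, ∀ w ∈ Wm, ⁅a, w⁆ ∈ Wm) {x w : L} (hw : w ∈ Wm) : ⁅x, w⁆ ∈ Wm := by
  let N : LieSubalgebra K L :=
    { carrier := {y | ∀ w ∈ Wm, ⁅y, w⁆ ∈ Wm}
      add_mem' := fun hy hz w hw => by rw [add_lie]; exact add_mem (hy w hw) (hz w hw)
      zero_mem' := fun w hw => by simp
      smul_mem' := fun c y hy w hw => by rw [smul_lie]; exact Submodule.smul_mem _ _ (hy w hw)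
      lie_mem' := fun {y z} hy hz w hw => by
        rw [lie_lie]; exact sub_mem (hy _ (hz w hw)) (hz _ (hy w hw)) }
  have hAN : A ⊆ (N : Set L) := h
  have hle : LieSubalgebra.lieSpan K L A ≤ N := (LieSubalgebra.lieSpan_le).mpr hAN
  rw [hA] at hle
  exact hle (LieSubalgebra.mem_top x) w hw

lemma W_eq_top_of_stab [LieAlgebra.IsSimple K L]
    (hA : LieSubalgebra.lieSpan K L A = ⊤) (hb : b ≠ 0) {k : ℕ}
    (h : W K A b (k + 1) = W K A b k) : W K A b k = ⊤ := by
  have hbW : b ∈ W K A b k := h ▸ b_mem_W K (by omega)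
  have hlie : ∀ x : L, ∀ w ∈ W K A b k, ⁅x, w⁆ ∈ W K A b k := by
    intro x w hw
    exact lie_mem_of_forall K hA _ (fun a ha w hw => h ▸ lie_mem_W K ha hw) hw
  let I : LieIdeal K L :=
    { W K A b k with
      lie_mem := fun {x m} hm => hlie x m hm }
  rcases LieAlgebra.IsSimple.eq_bot_or_eq_top I with hI | hI
  · exfalso
    apply hb
    have : b ∈ I := hbW
    rw [hI] at this
    simpa using this
  · have : (I : Submodule K L) = ⊤ := by rw [hI]; rfl
    exact this

end StmtAux

/-- For a simple finite-dimensional Lie algebra `𝔤` of dimension `d`, a generating set `A` and a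
nonzero `b`, the union `T_{≤k}(A,b)` spans a subspace of dimension at least `k` for all `k ≤ d`;
in particular `T_{≤d}(A,b)` spans `𝔤`. -/
theorem stmt1 [FiniteDimensional K L] [LieAlgebra.IsSimple K L]
    (A : Set L) (hA : LieSubalgebra.lieSpan K L A = ⊤) (b : L) (hb : b ≠ 0) :
    (∀ k ≤ Module.finrank K L,
      k ≤ Module.finrank K
        ↥(Submodule.span K (⋃ j ∈ Finset.range (k + 1), towerRel A b j))) ∧
    Submodule.span K (⋃ j ∈ Finset.range (Module.finrank K L + 1), towerRel A b j) = ⊤ := by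
  have hW : ∀ k : ℕ, Submodule.span K (⋃ j ∈ Finset.range (k + 1), towerRel A b j)
      = StmtAux.W K A b k := fun k => rfl
  have key : ∀ k : ℕ, k ≤ Module.finrank K (StmtAux.W K A b k) ∨ StmtAux.W K A b k = ⊤ := by
    intro k
    induction k with
    | zero => left; exact Nat.zero_le _
    | succ k ih =>
      rcases ih with hk | hk
      · by_cases h : StmtAux.W K A b (k + 1) = StmtAux.W K A b k
        · right
          rw [h]
          exact StmtAux.W_eq_top_of_stab K hA hb h
        · left
          have hlt : StmtAux.W K A b k < StmtAux.W K A b (k + 1) :=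
            lt_of_le_of_ne (StmtAux.W_mono K) (Ne.symm h)
          have := Submodule.finrank_lt_finrank_of_lt hlt
          omega
      · right
        exact top_unique (hk ▸ StmtAux.W_mono K)
  constructor
  · intro k hk
    rw [hW k]
    rcases key k with h | h
    · exact h
    · rw [h, finrank_top]
      exact hk
  · rw [hW]
    rcases key (Module.finrank K L) with h | h
    · apply Submodule.eq_top_of_finrank_eq
      have hle := Submodule.finrank_le (StmtAux.W K A b (Module.finrank K L))
      omega
    · exact h
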